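/- Let K ⊂ ℂ be compact and let ν be a finite Borel measure on K such that (K, ν) satisfies the Bernstein–Markov property. For k ≥ 1 set Z_k := ∫_{K^{k+1}} |VDM_k(z_0,…,z_k)|² dν(z_0)⋯dν(z_k), where VDM_k(z_0,…,z_k) = ∏_{0 ≤ i < j ≤ k}(z_j − z_i), and set δ_k(K) := max_{z_0,…,z_k ∈ K} ∏_{i<j}|z_i − z_j|^{2/(k(k+1))}. Then there is a real number δ(K) ≥ 0 such that δ_k(K) → δ(K) (the sequence δ_k(K) is nonincreasing) and Z_k^{1/k²} → δ(K) as k → ∞. -/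

import Mathlib

open MeasureTheory Filter

/-- `(K, ν)` satisfies the Bernstein–Markov property: for every `ε > 0` there is `C > 0`
such that for every `k ≥ 1` and every polynomial `p` of degree at most `k`,
`sup_{z ∈ K} |p(z)| ≤ C (1+ε)^k (∫_K |p|² dν)^{1/2}`. -/
def BernsteinMarkov (K : Set ℂ) (ν : Measure ℂ) : Prop :=
  ∀ ε : ℝ, 0 < ε → ∃ C : ℝ, 0 < C ∧ ∀ k : ℕ, 1 ≤ k → ∀ p : Polynomial ℂ,
    p.natDegree ≤ k → ∀ z ∈ K,
      ‖p.eval z‖ ≤ C * (1 + ε) ^ k * Real.sqrt (∫ w in K, ‖p.eval w‖ ^ 2 ∂ν)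

/-- The classical Vandermonde determinant `VDM_k(z_0,…,z_k) = ∏_{i<j} (z_j - z_i)`. -/
noncomputable def VDM (k : ℕ) (z : Fin (k + 1) → ℂ) : ℂ :=
  ∏ i : Fin (k + 1), ∏ j ∈ Finset.Ioi i, (z j - z i)

/-- `Z_k = ∫_{K^{k+1}} |VDM_k(z_0,…,z_k)|² dν(z_0)⋯dν(z_k)`. -/
noncomputable def Zk (K : Set ℂ) (ν : Measure ℂ) (k : ℕ) : ℝ :=
  ∫ z in {z : Fin (k + 1) → ℂ | ∀ i, z i ∈ K}, ‖VDM k z‖ ^ 2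
    ∂(Measure.pi fun _ : Fin (k + 1) => ν)

/-- The `k`-th order diameter `δ_k(K) = max_{z_0,…,z_k ∈ K} ∏_{i<j} |z_i - z_j|^{2/(k(k+1))}`. -/
noncomputable def deltak (K : Set ℂ) (k : ℕ) : ℝ :=
  sSup ((fun z : Fin (k + 1) → ℂ => ‖VDM k z‖ ^ ((2 : ℝ) / ((k : ℝ) * ((k : ℝ) + 1)))) ''
    {z : Fin (k + 1) → ℂ | ∀ i, z i ∈ K})

lemma VDM_continuous (k : ℕ) : Continuous (VDM k) := by
  unfold VDM
  exact continuous_finset_prod _ fun i _ => continuous_finset_prod _ fun j _ =>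
    (continuous_apply j).sub (continuous_apply i)
lemma VDM_eq_pairs (k : ℕ) (z : Fin (k + 1) → ℂ) :
    VDM k z = ∏ p ∈ Finset.univ.filter (fun p : Fin (k+1) × Fin (k+1) => p.1 < p.2),
      (z p.2 - z p.1) := by
  rw [Finset.prod_filter]
  rw [← Finset.univ_product_univ,
    Finset.prod_product' (f := fun i j : Fin (k+1) => if i < j then z j - z i else 1)]
  unfold VDM
  refine Finset.prod_congr rfl fun i _ => ?_
  rw [← Finset.prod_filter, Finset.filter_lt_eq_Ioi]
lemma prod_VDM_succAbove (k : ℕ) (z : Fin (k + 2) → ℂ) :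
    ∏ ℓ : Fin (k + 2), VDM k (z ∘ ℓ.succAbove) = VDM (k + 1) z ^ k := by
  have key : ∀ ℓ : Fin (k + 2), VDM k (z ∘ ℓ.succAbove) =
      ∏ q ∈ Finset.univ.filter
        (fun q : Fin (k+2) × Fin (k+2) => q.1 < q.2 ∧ q.1 ≠ ℓ ∧ q.2 ≠ ℓ),
        (z q.2 - z q.1) := by
    intro ℓ
    rw [VDM_eq_pairs]
    refine Finset.prod_nbij (fun p => (ℓ.succAbove p.1, ℓ.succAbove p.2)) ?_ ?_ ?_ ?_
    · intro p hp
      simp only [Finset.mem_filter, Finset.mem_univ, true_and] at hp ⊢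
      exact ⟨Fin.strictMono_succAbove ℓ hp, Fin.succAbove_ne ℓ p.1, Fin.succAbove_ne ℓ p.2⟩
    · intro p hp q hq h
      simp only [Prod.mk.injEq] at h
      exact Prod.ext (Fin.succAbove_right_injective h.1) (Fin.succAbove_right_injective h.2)
    · intro q hq
      simp only [Finset.coe_filter, Set.mem_setOf_eq, Finset.mem_univ, true_and] at hq
      obtain ⟨a, ha⟩ := Fin.exists_succAbove_eq hq.2.1
      obtain ⟨b, hb⟩ := Fin.exists_succAbove_eq hq.2.2
      refine ⟨(a, b), ?_, ?_⟩
      · simp only [Finset.coe_filter, Set.mem_setOf_eq, Finset.mem_univ, true_and]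
        have := hq.1; rw [← ha, ← hb] at this
        exact (Fin.strictMono_succAbove ℓ).lt_iff_lt.mp this
      · simp [ha, hb]
    · intro p hp; rfl
  simp only [key]
  rw [Finset.prod_comm' (t' := Finset.univ.filter
      (fun q : Fin (k+2) × Fin (k+2) => q.1 < q.2))
    (s' := fun q => Finset.univ.filter (fun ℓ => q.1 ≠ ℓ ∧ q.2 ≠ ℓ))]
  · rw [VDM_eq_pairs, ← Finset.prod_pow]
    refine Finset.prod_congr rfl fun q hq => ?_
    simp only [Finset.mem_filter, Finset.mem_univ, true_and] at hq
    rw [Finset.prod_const]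
    congr 1
    have : Finset.univ.filter (fun ℓ : Fin (k+2) => q.1 ≠ ℓ ∧ q.2 ≠ ℓ)
        = ({q.1, q.2} : Finset (Fin (k+2)))ᶜ := by
      ext ℓ; simp [Finset.mem_compl, eq_comm, and_comm]
    rw [this, Finset.card_compl, Finset.card_insert_of_notMem (by simp [hq.ne]),
      Finset.card_singleton]
    simp
  · intro ℓ q
    simp only [Finset.mem_filter, Finset.mem_univ, true_and]
    tauto
noncomputable def Vmax (K : Set ℂ) (k : ℕ) : ℝ :=
  sSup ((fun z : Fin (k + 1) → ℂ => ‖VDM k z‖) '' {z | ∀ i, z i ∈ K})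
lemma setK_eq (K : Set ℂ) (k : ℕ) :
    {z : Fin (k + 1) → ℂ | ∀ i, z i ∈ K} = Set.pi Set.univ (fun _ => K) := by
  ext z; simp [Set.mem_pi]
lemma setK_compact {K : Set ℂ} (hK : IsCompact K) (k : ℕ) :
    IsCompact {z : Fin (k + 1) → ℂ | ∀ i, z i ∈ K} := by
  rw [setK_eq]; exact isCompact_univ_pi fun _ => hK
lemma setK_nonempty {K : Set ℂ} (hne : K.Nonempty) (k : ℕ) :
    {z : Fin (k + 1) → ℂ | ∀ i, z i ∈ K}.Nonempty := by
  obtain ⟨a, ha⟩ := hne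
  exact ⟨fun _ => a, fun _ => ha⟩
lemma Vmax_spec {K : Set ℂ} (hK : IsCompact K) (hne : K.Nonempty) (k : ℕ) :
    ∃ z : Fin (k + 1) → ℂ, (∀ i, z i ∈ K) ∧ ‖VDM k z‖ = Vmax K k ∧
      ∀ w : Fin (k + 1) → ℂ, (∀ i, w i ∈ K) → ‖VDM k w‖ ≤ Vmax K k := by
  obtain ⟨z, hz, h1, h2⟩ := (setK_compact hK k).exists_sSup_image_eq_and_ge
    (setK_nonempty hne k) ((VDM_continuous k).norm.continuousOn)
  have h1' : ‖VDM k z‖ = Vmax K k := h1.symm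
  exact ⟨z, hz, h1', fun w hw => h1' ▸ h2 w hw⟩
lemma Vmax_nonneg {K : Set ℂ} (hK : IsCompact K) (hne : K.Nonempty) (k : ℕ) :
    0 ≤ Vmax K k := by
  obtain ⟨z, hz, h1, -⟩ := Vmax_spec hK hne k
  exact h1 ▸ norm_nonneg _
lemma deltak_eq {K : Set ℂ} (hK : IsCompact K) (hne : K.Nonempty) (k : ℕ) :
    deltak K k = Vmax K k ^ ((2 : ℝ) / ((k : ℝ) * ((k : ℝ) + 1))) := by
  obtain ⟨z, hz, h1, h2⟩ := Vmax_spec hK hne k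
  have hα : 0 ≤ (2 : ℝ) / ((k : ℝ) * ((k : ℝ) + 1)) := by positivity
  refine IsGreatest.csSup_eq ⟨⟨z, hz, by dsimp only; rw [h1]⟩, ?_⟩
  rintro x ⟨w, hw, rfl⟩
  exact Real.rpow_le_rpow (norm_nonneg _) (h2 w hw) hα
lemma Vmax_pow_le {K : Set ℂ} (hK : IsCompact K) (hne : K.Nonempty) (k : ℕ) :
    Vmax K (k + 1) ^ k ≤ Vmax K k ^ (k + 2) := by
  obtain ⟨z, hz, h1, -⟩ := Vmax_spec hK hne (k + 1)
  obtain ⟨-, -, -, h2⟩ := Vmax_spec hK hne k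
  calc Vmax K (k + 1) ^ k = ‖VDM (k + 1) z ^ k‖ := by rw [norm_pow, h1]
    _ = ∏ ℓ : Fin (k + 2), ‖VDM k (z ∘ ℓ.succAbove)‖ := by
        rw [← prod_VDM_succAbove, norm_prod]
    _ ≤ ∏ ℓ : Fin (k + 2), Vmax K k := by
        refine Finset.prod_le_prod (fun _ _ => norm_nonneg _) fun ℓ _ => ?_
        exact h2 _ (fun i => hz (ℓ.succAbove i))
    _ = Vmax K k ^ (k + 2) := by simp [Finset.prod_const]
lemma deltak_succ_le {K : Set ℂ} (hK : IsCompact K) (hne : K.Nonempty) (k : ℕ)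
    (hk : 1 ≤ k) : deltak K (k + 1) ≤ deltak K k := by
  rw [deltak_eq hK hne, deltak_eq hK hne]
  have hV1 := Vmax_nonneg hK hne (k + 1)
  have hV0 := Vmax_nonneg hK hne k
  have hkR : (0 : ℝ) < k := by exact_mod_cast hk
  have h := Vmax_pow_le hK hne k
  have hβ : (0 : ℝ) ≤ 2 / ((k : ℝ) * ((k : ℝ) + 1) * ((k : ℝ) + 2)) := by positivity
  have := Real.rpow_le_rpow (by positivity) h hβ
  rw [← Real.rpow_natCast (Vmax K (k+1)) k, ← Real.rpow_natCast (Vmax K k) (k+2),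
    ← Real.rpow_mul hV1, ← Real.rpow_mul hV0] at this
  push_cast at this
  have e1 : (k : ℝ) * (2 / ((k : ℝ) * ((k : ℝ) + 1) * ((k : ℝ) + 2)))
      = 2 / (((k : ℝ) + 1) * (((k : ℝ) + 1) + 1)) := by
    field_simp; ring
  have e2 : ((k : ℝ) + 2) * (2 / ((k : ℝ) * ((k : ℝ) + 1) * ((k : ℝ) + 2)))
      = 2 / ((k : ℝ) * ((k : ℝ) + 1)) := by
    field_simp
  rw [e1, e2] at this
  convert this using 3 <;> push_cast <;> ring
lemma ae_memK {K : Set ℂ} {ν : Measure ℂ} (hν : ν Kᶜ = 0) : ∀ᵐ t ∂ν, t ∈ K := by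
  rw [MeasureTheory.ae_iff]
  exact hν
lemma ae_memK_pi {K : Set ℂ} {ν : Measure ℂ} (hν : ν Kᶜ = 0) (n : ℕ)
    [SigmaFinite ν] :
    ∀ᵐ z ∂(Measure.pi fun _ : Fin n => ν), ∀ i, z i ∈ K := by
  rw [MeasureTheory.ae_all_iff]
  intro i
  rw [MeasureTheory.ae_iff]
  have : {z : Fin n → ℂ | ¬ z i ∈ K} = (fun z : Fin n → ℂ => z i) ⁻¹' Kᶜ := rfl
  rw [this]
  exact MeasureTheory.Measure.pi_eval_preimage_null _ hν
lemma Zk_eq {K : Set ℂ} {ν : Measure ℂ} (hν : ν Kᶜ = 0) [SigmaFinite ν] (k : ℕ) :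
    Zk K ν k = ∫ z, ‖VDM k z‖ ^ 2 ∂(Measure.pi fun _ : Fin (k + 1) => ν) := by
  unfold Zk
  rw [Measure.restrict_eq_self_of_ae_mem]
  exact ae_memK_pi hν (k + 1)
lemma Zk_nonneg (K : Set ℂ) (ν : Measure ℂ) (k : ℕ) : 0 ≤ Zk K ν k :=
  MeasureTheory.integral_nonneg fun z => by positivity
lemma Zk_le {K : Set ℂ} {ν : Measure ℂ} (hK : IsCompact K) (hne : K.Nonempty)
    (hν : ν Kᶜ = 0) [IsFiniteMeasure ν] (k : ℕ) :
    Zk K ν k ≤ Vmax K k ^ 2 * ((ν K).toReal) ^ (k + 1) := by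
  rw [Zk_eq hν]
  have hbound : ∀ᵐ z ∂(Measure.pi fun _ : Fin (k + 1) => ν),
      ‖‖VDM k z‖ ^ 2‖ ≤ Vmax K k ^ 2 := by
    filter_upwards [ae_memK_pi hν (k + 1)] with z hz
    obtain ⟨-, -, -, h2⟩ := Vmax_spec hK hne k
    rw [Real.norm_eq_abs, abs_of_nonneg (by positivity)]
    exact pow_le_pow_left₀ (norm_nonneg _) (h2 z hz) 2
  have := MeasureTheory.norm_integral_le_of_norm_le_const hbound
    (f := fun z => ‖VDM k z‖ ^ 2)
  have huniv : (Measure.pi fun _ : Fin (k + 1) => ν) Set.univ = (ν K) ^ (k + 1) := by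
    rw [Measure.pi_univ]
    have : ν Set.univ = ν K := by
      rw [← measure_add_measure_compl hK.isClosed.measurableSet, hν, add_zero]
    simp [this, Finset.prod_const]
  calc ∫ z, ‖VDM k z‖ ^ 2 ∂(Measure.pi fun _ : Fin (k + 1) => ν)
      ≤ ‖∫ z, ‖VDM k z‖ ^ 2 ∂(Measure.pi fun _ : Fin (k + 1) => ν)‖ := le_abs_self _
    _ ≤ Vmax K k ^ 2 * ((Measure.pi fun _ : Fin (k + 1) => ν) Set.univ).toReal := this
    _ = Vmax K k ^ 2 * ((ν K).toReal) ^ (k + 1) := by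
        rw [huniv, ENNReal.toReal_pow]
open Polynomial in
lemma exists_slice_poly (k : ℕ) (z : Fin (k + 1) → ℂ) (m : Fin (k + 1)) :
    ∃ p : Polynomial ℂ, p.natDegree ≤ k ∧
      ∀ w : ℂ, p.eval w = VDM k (Function.update z m w) := by
  classical
  set c : ℂ := ∏ q ∈ Finset.univ.filter
      (fun q : Fin (k+1) × Fin (k+1) => (q.1 < q.2 ∧ q.2 ≠ m) ∧ q.1 ≠ m), (z q.2 - z q.1)
  refine ⟨C c * (∏ i ∈ Finset.Iio m, (X - C (z i))) * (∏ j ∈ Finset.Ioi m, (C (z j) - X)),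
    ?_, ?_⟩
  · refine le_trans (natDegree_mul_le) ?_
    have h1 : (C c * ∏ i ∈ Finset.Iio m, (X - C (z i))).natDegree ≤ (m : ℕ) := by
      refine le_trans natDegree_mul_le ?_
      simp only [natDegree_C, zero_add]
      refine le_trans (natDegree_prod_le _ _) ?_
      refine le_trans (Finset.sum_le_card_nsmul _ _ 1
        fun i _ => le_of_eq (natDegree_X_sub_C _)) ?_
      simp [Fin.card_Iio]
    have h2 : (∏ j ∈ Finset.Ioi m, (C (z j) - X)).natDegree ≤ k - (m : ℕ) := by
      refine le_trans (natDegree_prod_le _ _) ?_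
      refine le_trans (Finset.sum_le_card_nsmul _ _ 1
        fun j _ => le_trans (natDegree_sub_le _ _) (by simp [natDegree_C])) ?_
      rw [Fin.card_Ioi, smul_eq_mul, mul_one]; omega
    have hm : (m : ℕ) ≤ k := Nat.lt_succ_iff.mp m.isLt
    omega
  · intro w
    have hupd : ∀ i : Fin (k+1), Function.update z m w i = if i = m then w else z i := by
      intro i; by_cases h : i = m
      · subst h; simp
      · simp [h]
    rw [VDM_eq_pairs]
    rw [← Finset.prod_filter_mul_prod_filter_not
      (Finset.univ.filter (fun q : Fin (k+1) × Fin (k+1) => q.1 < q.2)) (fun q => q.2 = m),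
      Finset.filter_filter, Finset.filter_filter]
    rw [← Finset.prod_filter_mul_prod_filter_not
      (Finset.univ.filter (fun q : Fin (k+1) × Fin (k+1) => q.1 < q.2 ∧ ¬ q.2 = m))
      (fun q => q.1 = m), Finset.filter_filter, Finset.filter_filter]
    -- three pieces
    have hA : ∏ q ∈ Finset.univ.filter
        (fun q : Fin (k+1) × Fin (k+1) => q.1 < q.2 ∧ q.2 = m),
        (Function.update z m w q.2 - Function.update z m w q.1)
        = ∏ i ∈ Finset.Iio m, (w - z i) := by
      refine Finset.prod_nbij (fun q => q.1) ?_ ?_ ?_ ?_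
      · intro q hq
        simp only [Finset.mem_filter, Finset.mem_univ, true_and] at hq
        simp [Finset.mem_Iio, hq.2 ▸ hq.1]
      · intro q hq q' hq' h
        simp only [Finset.coe_filter, Set.mem_setOf_eq, Finset.mem_univ, true_and] at hq hq'
        exact Prod.ext h (hq.2.trans hq'.2.symm)
      · intro i hi
        simp only [Finset.coe_Iio, Set.mem_Iio] at hi
        exact ⟨(i, m), by simp [hi], rfl⟩
      · intro q hq
        simp only [Finset.mem_filter, Finset.mem_univ, true_and] at hq
        rw [hupd, hupd, hq.2, if_pos rfl, if_neg (by rw [← hq.2]; exact ne_of_lt hq.1)]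
    have hB : ∏ q ∈ Finset.univ.filter
        (fun q : Fin (k+1) × Fin (k+1) => (q.1 < q.2 ∧ ¬ q.2 = m) ∧ q.1 = m),
        (Function.update z m w q.2 - Function.update z m w q.1)
        = ∏ j ∈ Finset.Ioi m, (z j - w) := by
      refine Finset.prod_nbij (fun q => q.2) ?_ ?_ ?_ ?_
      · intro q hq
        simp only [Finset.mem_filter, Finset.mem_univ, true_and] at hq
        simp [Finset.mem_Ioi, hq.2 ▸ hq.1.1]
      · intro q hq q' hq' h
        simp only [Finset.coe_filter, Set.mem_setOf_eq, Finset.mem_univ, true_and] at hq hq'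
        exact Prod.ext (hq.2.trans hq'.2.symm) h
      · intro j hj
        simp only [Finset.coe_Ioi, Set.mem_Ioi] at hj
        exact ⟨(m, j), by simp [hj, (ne_of_gt hj)], rfl⟩
      · intro q hq
        simp only [Finset.mem_filter, Finset.mem_univ, true_and] at hq
        rw [hupd, hupd, hq.2, if_pos rfl, if_neg hq.1.2]
    have hC : ∏ q ∈ Finset.univ.filter
        (fun q : Fin (k+1) × Fin (k+1) => (q.1 < q.2 ∧ ¬ q.2 = m) ∧ ¬ q.1 = m),
        (Function.update z m w q.2 - Function.update z m w q.1) = c := by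
      refine Finset.prod_congr (by simp only [ne_eq]) fun q hq => ?_
      simp only [Finset.mem_filter, Finset.mem_univ, true_and] at hq
      rw [hupd, hupd, if_neg hq.1.2, if_neg hq.2]
    rw [hA, hB, hC]
    simp only [eval_mul, eval_C, eval_prod, eval_sub, eval_X]
    ring
lemma mem_cons_K {K : Set ℂ} {n : ℕ} {t : ℂ} {y : Fin n → ℂ} (ht : t ∈ K)
    (hy : ∀ i, y i ∈ K) : ∀ i, (Fin.cons t y : Fin (n+1) → ℂ) i ∈ K := by
  intro i
  refine Fin.cases ?_ (fun j => ?_) i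
  · simpa using ht
  · simpa using hy j
lemma measurable_consmap (n : ℕ) :
    Measurable (fun p : ℂ × (Fin n → ℂ) => (Fin.cons p.1 p.2 : Fin (n + 1) → ℂ)) := by
  refine measurable_pi_lambda _ fun i => ?_
  refine Fin.cases ?_ (fun j => ?_) i
  · simpa using measurable_fst
  · simp only [Fin.cons_succ]; exact (measurable_pi_apply j).comp measurable_snd
lemma ae_prod_left {α β : Type*} [MeasurableSpace α] [MeasurableSpace β]
    {μ : Measure α} {ν : Measure β} [SFinite μ] [SFinite ν] {p : α → Prop}
    (h : ∀ᵐ x ∂μ, p x) : ∀ᵐ z ∂μ.prod ν, p z.1 := by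
  rw [MeasureTheory.ae_iff] at h ⊢
  refine measure_mono_null (t := {x | ¬ p x} ×ˢ Set.univ) (fun z hz => ?_) ?_
  · exact Set.mem_prod.2 ⟨hz, Set.mem_univ z.2⟩
  · rw [Measure.prod_prod, h, zero_mul]
lemma ae_prod_right {α β : Type*} [MeasurableSpace α] [MeasurableSpace β]
    {μ : Measure α} {ν : Measure β} [SFinite μ] [SFinite ν] {p : β → Prop}
    (h : ∀ᵐ x ∂ν, p x) : ∀ᵐ z ∂μ.prod ν, p z.2 := by
  rw [MeasureTheory.ae_iff] at h ⊢
  refine measure_mono_null (t := Set.univ ×ˢ {x | ¬ p x}) (fun z hz => ?_) ?_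
  · exact Set.mem_prod.2 ⟨Set.mem_univ z.1, hz⟩
  · rw [Measure.prod_prod, h, mul_zero]
lemma integrable_of_K_bound {α : Type*} [MeasurableSpace α] {μ : Measure α}
    [IsFiniteMeasure μ] {φ : α → ℝ} (hm : AEStronglyMeasurable φ μ)
    {P : α → Prop} (hae : ∀ᵐ x ∂μ, P x) {M : ℝ} (hb : ∀ x, P x → |φ x| ≤ M) :
    Integrable φ μ := by
  refine Integrable.mono' (integrable_const M) hm ?_
  filter_upwards [hae] with x hx
  simpa [Real.norm_eq_abs] using hb x hx
lemma piFinSuccAbove_symm_cons (n : ℕ) (t : ℂ) (y : Fin n → ℂ) :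
    (MeasurableEquiv.piFinSuccAbove (fun _ : Fin (n + 1) => ℂ) 0).symm (t, y)
      = Fin.cons t y := by
  simp [MeasurableEquiv.piFinSuccAbove]; rfl
lemma peel {K : Set ℂ} {ν : Measure ℂ} [IsFiniteMeasure ν] (hν : ν Kᶜ = 0)
    {A : ℝ} (hA : 0 ≤ A) :
    ∀ (n : ℕ) (f : (Fin n → ℂ) → ℝ) (M : ℝ), StronglyMeasurable f →
      (∀ y, 0 ≤ f y) →
      (∀ y, (∀ i, y i ∈ K) → |f y| ≤ M) →
      (∀ y : Fin n → ℂ, (∀ i, y i ∈ K) → ∀ m : Fin n,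
        f y ≤ A * ∫ t, f (Function.update y m t) ∂ν) →
      ∀ z, (∀ i, z i ∈ K) → f z ≤ A ^ n * ∫ y, f y ∂(Measure.pi fun _ : Fin n => ν) := by
  intro n
  induction n with
  | zero =>
    intro f M hmeas hpos hbd hslice z hz
    rw [Measure.pi_of_empty (fun _ : Fin 0 => ν), MeasureTheory.integral_dirac,
      pow_zero, one_mul]
    exact le_of_eq (congrArg f (Subsingleton.elim _ _))
  | succ n ih =>
    intro f M hmeas hpos hbd hslice z hz
    have hconsmeas : ∀ (w : Fin n → ℂ), Measurable (fun t : ℂ => (Fin.cons t w : Fin (n+1) → ℂ)) :=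
      fun w => (measurable_consmap n).comp (measurable_id.prodMk measurable_const)
    set F : (Fin n → ℂ) × ℂ → ℝ := fun p => f (Fin.cons p.2 p.1) with hF
    have hFmeas : StronglyMeasurable F :=
      hmeas.comp_measurable ((measurable_consmap n).comp
        (measurable_snd.prodMk measurable_fst))
    set g : (Fin n → ℂ) → ℝ := fun y => ∫ t, f (Fin.cons t y) ∂ν with hg
    have hgmeas : StronglyMeasurable g := hFmeas.integral_prod_right'
    have hgpos : ∀ y, 0 ≤ g y := fun y => MeasureTheory.integral_nonneg fun t => hpos _
    have hgbd : ∀ y, (∀ i, y i ∈ K) → |g y| ≤ M * (ν Set.univ).toReal := by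
      intro y hy
      have : ‖∫ t, f (Fin.cons t y) ∂ν‖ ≤ M * (ν Set.univ).toReal := by
        refine MeasureTheory.norm_integral_le_of_norm_le_const ?_
        filter_upwards [ae_memK hν] with t ht
        simpa [Real.norm_eq_abs] using hbd _ (mem_cons_K ht hy)
      simpa [Real.norm_eq_abs, hg] using this
    have hgslice : ∀ y : Fin n → ℂ, (∀ i, y i ∈ K) → ∀ m : Fin n,
        g y ≤ A * ∫ s, g (Function.update y m s) ∂ν := by
      intro y hy m
      have hupdK : ∀ s, s ∈ K → ∀ i, Function.update y m s i ∈ K := by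
        intro s hs i
        rcases eq_or_ne i m with rfl | h
        · simpa using hs
        · simpa [h] using hy i
      have hinner_meas : StronglyMeasurable
          (fun p : ℂ × ℂ => f (Fin.cons p.1 (Function.update y m p.2))) :=
        hmeas.comp_measurable ((measurable_consmap n).comp
          (measurable_fst.prodMk ((measurable_update y).comp measurable_snd)))
      have hprod_int : Integrable
          (fun p : ℂ × ℂ => f (Fin.cons p.1 (Function.update y m p.2))) (ν.prod ν) := by
        refine integrable_of_K_bound hinner_meas.aestronglyMeasurable
          (P := fun p : ℂ × ℂ => p.1 ∈ K ∧ p.2 ∈ K)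
          ((ae_prod_left (ae_memK hν)).and (ae_prod_right (ae_memK hν))) (M := M) ?_
        rintro ⟨t, s⟩ ⟨ht, hs⟩
        exact hbd _ (mem_cons_K ht (hupdK s hs))
      set h1 : ℂ → ℝ := fun t => ∫ s, f (Fin.cons t (Function.update y m s)) ∂ν with hh1
      have hh1meas : StronglyMeasurable h1 := hinner_meas.integral_prod_right'
      have hh1bd : ∀ t, t ∈ K → |h1 t| ≤ M * (ν Set.univ).toReal := by
        intro t ht
        have : ‖∫ s, f (Fin.cons t (Function.update y m s)) ∂ν‖
            ≤ M * (ν Set.univ).toReal := by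
          refine MeasureTheory.norm_integral_le_of_norm_le_const ?_
          filter_upwards [ae_memK hν] with s hs
          simpa [Real.norm_eq_abs] using hbd _ (mem_cons_K ht (hupdK s hs))
        simpa [Real.norm_eq_abs, hh1] using this
      have hh1int : Integrable h1 ν :=
        integrable_of_K_bound hh1meas.aestronglyMeasurable (ae_memK hν) hh1bd
      have step1 : g y ≤ ∫ t, A * h1 t ∂ν := by
        refine MeasureTheory.integral_mono_of_nonneg
          (Filter.Eventually.of_forall fun t => hpos _) (hh1int.const_mul A) ?_
        filter_upwards [ae_memK hν] with t ht
        have := hslice (Fin.cons t y) (mem_cons_K ht hy) m.succ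
        have hrw : ∀ s : ℂ, Function.update (Fin.cons t y : Fin (n+1) → ℂ) m.succ s
            = Fin.cons t (Function.update y m s) := by
          intro s; rw [Fin.cons_update]
        have heq : (∫ s, f (Function.update (Fin.cons t y : Fin (n+1) → ℂ) m.succ s) ∂ν)
            = h1 t :=
          MeasureTheory.integral_congr_ae (Filter.Eventually.of_forall fun s => by dsimp only; rw [hrw s])
        show f (Fin.cons t y) ≤ A * h1 t
        rw [← heq]
        exact this
      have step2 : ∫ t, A * h1 t ∂ν = A * ∫ s, g (Function.update y m s) ∂ν := by
        rw [MeasureTheory.integral_const_mul]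
        congr 1
        have := MeasureTheory.integral_integral_swap
          (f := fun t s => f (Fin.cons t (Function.update y m s))) hprod_int
        rw [hh1]
        exact this
      exact step1.trans (le_of_eq step2)
    -- apply IH to g
    have hIH := ih g (M * (ν Set.univ).toReal) hgmeas hgpos hgbd hgslice
      (Fin.tail z) (fun i => hz i.succ)
    -- relate ∫ g to ∫ f
    have hfint : Integrable f (Measure.pi fun _ : Fin (n + 1) => ν) :=
      integrable_of_K_bound hmeas.aestronglyMeasurable (ae_memK_pi hν (n + 1)) hbd
    have key : ∫ y, g y ∂(Measure.pi fun _ : Fin n => ν)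
        = ∫ w, f w ∂(Measure.pi fun _ : Fin (n + 1) => ν) := by
      have hmp := MeasureTheory.measurePreserving_piFinSuccAbove
        (fun _ : Fin (n + 1) => ν) 0
      have hmap : ν.prod (Measure.pi fun _ : Fin n => ν)
          = Measure.map (MeasurableEquiv.piFinSuccAbove (fun _ : Fin (n+1) => ℂ) 0)
            (Measure.pi fun _ : Fin (n + 1) => ν) := hmp.map_eq.symm
      have e1 : ∫ p : ℂ × (Fin n → ℂ), f (Fin.cons p.1 p.2)
            ∂(ν.prod (Measure.pi fun _ : Fin n => ν))
          = ∫ w, f w ∂(Measure.pi fun _ : Fin (n + 1) => ν) := by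
        rw [hmap, MeasureTheory.integral_map_equiv]
        congr 1
        ext w
        have : (Fin.cons (((MeasurableEquiv.piFinSuccAbove (fun _ : Fin (n+1) => ℂ) 0) w).1)
            (((MeasurableEquiv.piFinSuccAbove (fun _ : Fin (n+1) => ℂ) 0) w).2)
              : Fin (n+1) → ℂ) = w := by
          rw [← piFinSuccAbove_symm_cons, Prod.mk.eta, MeasurableEquiv.symm_apply_apply]
        rw [this]
      have hintprod : Integrable (fun p : ℂ × (Fin n → ℂ) => f (Fin.cons p.1 p.2))
          (ν.prod (Measure.pi fun _ : Fin n => ν)) := by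
        refine integrable_of_K_bound
          ((hmeas.comp_measurable (measurable_consmap n)).aestronglyMeasurable)
          (P := fun p : ℂ × (Fin n → ℂ) => p.1 ∈ K ∧ ∀ i, p.2 i ∈ K)
          ((ae_prod_left (ae_memK hν)).and (ae_prod_right (ae_memK_pi hν n))) (M := M) ?_
        rintro ⟨t, y⟩ ⟨ht, hy⟩
        exact hbd _ (mem_cons_K ht hy)
      have e2 : ∫ p : ℂ × (Fin n → ℂ), f (Fin.cons p.1 p.2)
            ∂(ν.prod (Measure.pi fun _ : Fin n => ν))
          = ∫ y, g y ∂(Measure.pi fun _ : Fin n => ν) :=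
        MeasureTheory.integral_prod_symm _ hintprod
      rw [← e2, e1]
    -- finish
    have h0 : f z ≤ A * g (Fin.tail z) := by
      have := hslice z hz 0
      have hrw : ∀ t : ℂ, Function.update z 0 t = Fin.cons t (Fin.tail z) := by
        intro t
        conv_lhs => rw [← Fin.cons_self_tail z]
        rw [Fin.update_cons_zero]
      have heq2 : (∫ t, f (Function.update z 0 t) ∂ν)
          = ∫ t, f (Fin.cons t (Fin.tail z)) ∂ν :=
        MeasureTheory.integral_congr_ae (Filter.Eventually.of_forall fun t => by dsimp only; rw [hrw t])
      rw [heq2] at this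
      exact this
    calc f z ≤ A * g (Fin.tail z) := h0
      _ ≤ A * (A ^ n * ∫ y, g y ∂(Measure.pi fun _ : Fin n => ν)) :=
          mul_le_mul_of_nonneg_left hIH hA
      _ = A ^ (n + 1) * ∫ w, f w ∂(Measure.pi fun _ : Fin (n + 1) => ν) := by
          rw [key]; ring
lemma stepC {K : Set ℂ} {ν : Measure ℂ} (hK : IsCompact K) (hne : K.Nonempty)
    (hν : ν Kᶜ = 0) [IsFiniteMeasure ν] {C ε : ℝ} (hC : 0 < C) (hε : 0 < ε)
    (hbm : ∀ k : ℕ, 1 ≤ k → ∀ p : Polynomial ℂ, p.natDegree ≤ k → ∀ z ∈ K,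
      ‖p.eval z‖ ≤ C * (1 + ε) ^ k * Real.sqrt (∫ w in K, ‖p.eval w‖ ^ 2 ∂ν))
    (k : ℕ) (hk : 1 ≤ k) :
    Vmax K k ^ 2 ≤ ((C * (1 + ε) ^ k) ^ 2) ^ (k + 1) * Zk K ν k := by
  set A : ℝ := (C * (1 + ε) ^ k) ^ 2 with hA
  have hA0 : 0 ≤ A := sq_nonneg _
  set f : (Fin (k + 1) → ℂ) → ℝ := fun z => ‖VDM k z‖ ^ 2 with hf
  have hrestrict : ν.restrict K = ν := Measure.restrict_eq_self_of_ae_mem (ae_memK hν)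
  have hslice : ∀ y : Fin (k + 1) → ℂ, (∀ i, y i ∈ K) → ∀ m : Fin (k + 1),
      f y ≤ A * ∫ t, f (Function.update y m t) ∂ν := by
    intro y hy m
    obtain ⟨p, hdeg, heval⟩ := exists_slice_poly k y m
    have hIeq : (∫ w in K, ‖p.eval w‖ ^ 2 ∂ν) = ∫ t, f (Function.update y m t) ∂ν := by
      rw [hrestrict]
      refine MeasureTheory.integral_congr_ae (Filter.Eventually.of_forall fun t => ?_)
      dsimp only [hf]
      rw [heval t]
    have hI0 : 0 ≤ ∫ w in K, ‖p.eval w‖ ^ 2 ∂ν :=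
      MeasureTheory.integral_nonneg fun w => by positivity
    have hbm' := hbm k hk p hdeg (y m) (hy m)
    have hfy : f y = ‖p.eval (y m)‖ ^ 2 := by
      show ‖VDM k y‖ ^ 2 = _
      rw [heval (y m), Function.update_eq_self]
    rw [hfy, ← hIeq]
    calc ‖p.eval (y m)‖ ^ 2
        ≤ (C * (1 + ε) ^ k * Real.sqrt (∫ w in K, ‖p.eval w‖ ^ 2 ∂ν)) ^ 2 :=
          pow_le_pow_left₀ (norm_nonneg _) hbm' 2
      _ = A * ∫ w in K, ‖p.eval w‖ ^ 2 ∂ν := by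
          rw [mul_pow, Real.sq_sqrt hI0]
  obtain ⟨z, hz, hzmax, hub⟩ := Vmax_spec hK hne k
  have hbd : ∀ y : Fin (k + 1) → ℂ, (∀ i, y i ∈ K) → |f y| ≤ Vmax K k ^ 2 := by
    intro y hy
    show |‖VDM k y‖ ^ 2| ≤ _
    rw [abs_of_nonneg (by positivity)]
    exact pow_le_pow_left₀ (norm_nonneg _) (hub y hy) 2
  have := peel hν hA0 (k + 1) f (Vmax K k ^ 2)
    ((VDM_continuous k).norm.pow 2).stronglyMeasurable
    (fun y => by positivity) hbd hslice z hz
  rw [Zk_eq hν]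
  calc Vmax K k ^ 2 = f z := by rw [← hzmax]
    _ ≤ A ^ (k + 1) * ∫ y, f y ∂(Measure.pi fun _ : Fin (k + 1) => ν) := this
    _ = A ^ (k + 1) * ∫ y, ‖VDM k y‖ ^ 2 ∂(Measure.pi fun _ : Fin (k + 1) => ν) := rfl
lemma Dk_rpow {K : Set ℂ} (hK : IsCompact K) (hne : K.Nonempty) {k : ℕ} (hk : 1 ≤ k) :
    deltak K k ^ (((k : ℝ) + 1) / k) = Vmax K k ^ ((2 : ℝ) / (k : ℝ) ^ 2) := by
  have hk0 : (k : ℝ) ≠ 0 := Nat.cast_ne_zero.mpr (by omega)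
  rw [deltak_eq hK hne, ← Real.rpow_mul (Vmax_nonneg hK hne k)]
  congr 1
  field_simp
lemma upper_bound {K : Set ℂ} {ν : Measure ℂ} (hK : IsCompact K) (hne : K.Nonempty)
    (hν : ν Kᶜ = 0) [IsFiniteMeasure ν] {k : ℕ} (hk : 1 ≤ k) :
    Zk K ν k ^ ((1 : ℝ) / (k : ℝ) ^ 2)
      ≤ deltak K k ^ (((k : ℝ) + 1) / k) * ((ν K).toReal) ^ (((k : ℝ) + 1) / (k : ℝ) ^ 2) := by
  have hk0 : (k : ℝ) ≠ 0 := Nat.cast_ne_zero.mpr (by omega)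
  have hV0 := Vmax_nonneg hK hne k
  have hc0 : (0 : ℝ) ≤ (ν K).toReal := ENNReal.toReal_nonneg
  have h := Zk_le hK hne hν k
  have hexp : (0 : ℝ) ≤ 1 / (k : ℝ) ^ 2 := by positivity
  have h2 := Real.rpow_le_rpow (Zk_nonneg K ν k) h hexp
  rw [Dk_rpow hK hne hk]
  refine h2.trans (le_of_eq ?_)
  rw [Real.mul_rpow (by positivity) (by positivity),
    ← Real.rpow_natCast (Vmax K k) 2, ← Real.rpow_natCast ((ν K).toReal) (k + 1),
    ← Real.rpow_mul hV0, ← Real.rpow_mul hc0]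
  congr 1
  · congr 1
    push_cast
    field_simp
  · congr 1
    push_cast
    field_simp
lemma lower_bound {K : Set ℂ} {ν : Measure ℂ} (hK : IsCompact K) (hne : K.Nonempty)
    (hν : ν Kᶜ = 0) [IsFiniteMeasure ν] {C ε : ℝ} (hC : 0 < C) (hε : 0 < ε)
    (hbm : ∀ k : ℕ, 1 ≤ k → ∀ p : Polynomial ℂ, p.natDegree ≤ k → ∀ z ∈ K,
      ‖p.eval z‖ ≤ C * (1 + ε) ^ k * Real.sqrt (∫ w in K, ‖p.eval w‖ ^ 2 ∂ν))
    {k : ℕ} (hk : 1 ≤ k) :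
    deltak K k ^ (((k : ℝ) + 1) / k)
      ≤ (C ^ (2 * ((k : ℝ) + 1) / (k : ℝ) ^ 2) * (1 + ε) ^ (2 * ((k : ℝ) + 1) / (k : ℝ)))
        * Zk K ν k ^ ((1 : ℝ) / (k : ℝ) ^ 2) := by
  have hk0 : (k : ℝ) ≠ 0 := Nat.cast_ne_zero.mpr (by omega)
  have hV0 := Vmax_nonneg hK hne k
  have hε1 : (0 : ℝ) < 1 + ε := by linarith
  have h := stepC hK hne hν hC hε hbm k hk
  have hexp : (0 : ℝ) ≤ 1 / (k : ℝ) ^ 2 := by positivity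
  have h2 := Real.rpow_le_rpow (by positivity) h hexp
  rw [Dk_rpow hK hne hk]
  have hL : (Vmax K k ^ 2 : ℝ) ^ ((1 : ℝ) / (k : ℝ) ^ 2)
      = Vmax K k ^ ((2 : ℝ) / (k : ℝ) ^ 2) := by
    rw [← Real.rpow_natCast (Vmax K k) 2, ← Real.rpow_mul hV0]
    congr 1
    push_cast
    ring
  have hR : (((C * (1 + ε) ^ k) ^ 2) ^ (k + 1) * Zk K ν k) ^ ((1 : ℝ) / (k : ℝ) ^ 2)
      = (C ^ (2 * ((k : ℝ) + 1) / (k : ℝ) ^ 2) * (1 + ε) ^ (2 * ((k : ℝ) + 1) / (k : ℝ)))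
        * Zk K ν k ^ ((1 : ℝ) / (k : ℝ) ^ 2) := by
    rw [Real.mul_rpow (by positivity) (Zk_nonneg K ν k)]
    congr 1
    rw [← pow_mul, ← Real.rpow_natCast (C * (1 + ε) ^ k) (2 * (k + 1)),
      ← Real.rpow_mul (by positivity : (0:ℝ) ≤ C * (1 + ε) ^ k),
      Real.mul_rpow hC.le (by positivity),
      ← Real.rpow_natCast (1 + ε) k,
      ← Real.rpow_mul hε1.le]
    congr 1
    · congr 1
      push_cast
      field_simp
    · congr 1
      push_cast
      field_simp
  rw [hL, hR] at h2
  exact h2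
lemma tendsto_ratio1 : Tendsto (fun k : ℕ => ((k : ℝ) + 1) / k) atTop (nhds 1) := by
  have h : Tendsto (fun k : ℕ => 1 + 1 / (k : ℝ)) atTop (nhds (1 + 0)) :=
    tendsto_const_nhds.add tendsto_one_div_atTop_nhds_zero_nat
  rw [add_zero] at h
  refine h.congr' ?_
  filter_upwards [eventually_ge_atTop 1] with k hk
  have hk0 : (k : ℝ) ≠ 0 := Nat.cast_ne_zero.mpr (by omega)
  field_simp
lemma tendsto_ratio2 : Tendsto (fun k : ℕ => ((k : ℝ) + 1) / (k : ℝ) ^ 2) atTop (nhds 0) := by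
  have h : Tendsto (fun k : ℕ => (((k : ℝ) + 1) / k) * (1 / (k : ℝ))) atTop (nhds (1 * 0)) :=
    tendsto_ratio1.mul tendsto_one_div_atTop_nhds_zero_nat
  rw [mul_zero] at h
  refine h.congr' ?_
  filter_upwards [eventually_ge_atTop 1] with k hk
  have hk0 : (k : ℝ) ≠ 0 := Nat.cast_ne_zero.mpr (by omega)
  field_simp
lemma exists_eps {d x : ℝ} (hd : 0 < d) (hx0 : 0 ≤ x) (hx : x < d) :
    ∃ ε : ℝ, 0 < ε ∧ x < d / (1 + ε) ^ 2 := by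
  rcases eq_or_lt_of_le hx0 with rfl | hx0'
  · exact ⟨1, one_pos, by positivity⟩
  · have hr : 1 < d / x := (one_lt_div hx0').mpr hx
    have hs : 1 < Real.sqrt (d / x) := by
      rw [show (1 : ℝ) = Real.sqrt 1 from Real.sqrt_one.symm]
      exact Real.sqrt_lt_sqrt (by norm_num) hr
    refine ⟨(Real.sqrt (d / x) - 1) / 2, by linarith, ?_⟩
    have h1e : 1 + (Real.sqrt (d / x) - 1) / 2 = (Real.sqrt (d / x) + 1) / 2 := by ring
    rw [h1e, lt_div_iff₀ (by positivity)]
    have hlt : (Real.sqrt (d / x) + 1) / 2 < Real.sqrt (d / x) := by linarith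
    have hsq : ((Real.sqrt (d / x) + 1) / 2) ^ 2 < (Real.sqrt (d / x)) ^ 2 :=
      pow_lt_pow_left₀ hlt (by positivity) two_ne_zero
    have hss : (Real.sqrt (d / x)) ^ 2 = d / x := Real.sq_sqrt (by positivity)
    calc x * ((Real.sqrt (d / x) + 1) / 2) ^ 2 < x * (d / x) := by
          refine mul_lt_mul_of_pos_left (lt_of_lt_of_le hsq (le_of_eq hss)) hx0'
      _ = d := by field_simp

/-- If `K ⊂ ℂ` is compact and `(K, ν)` satisfies the Bernstein–Markov property, then there
is `δ(K) ≥ 0` (the transfinite diameter) such that `δ_k(K) → δ(K)` (the sequence `δ_k(K)`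
being nonincreasing) and `Z_k^{1/k²} → δ(K)` as `k → ∞`. -/
theorem Zk_tendsto_transfinite_diameter (K : Set ℂ) (hK : IsCompact K)
    (ν : Measure ℂ) [IsFiniteMeasure ν] (hν : ν Kᶜ = 0) (hBM : BernsteinMarkov K ν) :
    ∃ δ : ℝ, 0 ≤ δ ∧
      (∀ m n : ℕ, 1 ≤ m → m ≤ n → deltak K n ≤ deltak K m) ∧
      Tendsto (fun k => deltak K k) atTop (nhds δ) ∧
      Tendsto (fun k => Zk K ν k ^ ((1 : ℝ) / ((k : ℝ) ^ 2))) atTop (nhds δ) := by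
  by_cases hne : K.Nonempty
  · -- nonempty case
    set D : ℕ → ℝ := fun n => deltak K (n + 1) with hD
    have hanti : Antitone D :=
      antitone_nat_of_succ_le fun n => deltak_succ_le hK hne (n + 1) (by omega)
    have hDpos : ∀ n, 0 ≤ D n := by
      intro n
      rw [hD]
      dsimp only
      rw [deltak_eq hK hne]
      exact Real.rpow_nonneg (Vmax_nonneg hK hne _) _
    have hbdd : BddBelow (Set.range D) := ⟨0, by rintro x ⟨n, rfl⟩; exact hDpos n⟩
    set δ : ℝ := ⨅ n, D n with hδ
    have hδ0 : 0 ≤ δ := le_ciInf hDpos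
    have hDlim : Tendsto D atTop (nhds δ) := tendsto_atTop_ciInf hanti hbdd
    have hdel : Tendsto (fun k => deltak K k) atTop (nhds δ) :=
      (Filter.tendsto_add_atTop_iff_nat 1).mp hDlim
    have hmono : ∀ m n : ℕ, 1 ≤ m → m ≤ n → deltak K n ≤ deltak K m := by
      intro m n h1 h2
      have e1 : n - 1 + 1 = n := by omega
      have e2 : m - 1 + 1 = m := by omega
      have := hanti (show m - 1 ≤ n - 1 by omega)
      rw [hD] at this
      dsimp only at this
      rw [e1, e2] at this
      exact this
    -- positivity of ν K
    have hcK : 0 < (ν K).toReal := by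
      obtain ⟨a, ha⟩ := hne
      obtain ⟨C₁, hC₁, h₁⟩ := hBM 1 one_pos
      have h2 := h₁ 1 le_rfl 1 (by simp) a ha
      simp only [Polynomial.eval_one, norm_one, Polynomial.eval_one] at h2
      by_contra hc
      push_neg at hc
      have hc0 : (ν K).toReal = 0 := le_antisymm hc ENNReal.toReal_nonneg
      rw [MeasureTheory.setIntegral_congr_fun hK.isClosed.measurableSet
        (g := fun _ => (1 : ℝ)) (fun w _ => by simp)] at h2
      rw [MeasureTheory.setIntegral_const, smul_eq_mul, mul_one, MeasureTheory.measureReal_def, hc0] at h2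
      rw [Real.sqrt_zero, mul_zero] at h2
      linarith
    refine ⟨δ, hδ0, hmono, hdel, ?_⟩
    -- limit of the upper bound
    have hu : Tendsto (fun k : ℕ => deltak K k ^ (((k : ℝ) + 1) / k)) atTop (nhds δ) := by
      have := hdel.rpow tendsto_ratio1 (Or.inr one_pos)
      rwa [Real.rpow_one] at this
    have hup : Tendsto (fun k : ℕ => deltak K k ^ (((k : ℝ) + 1) / k)
        * ((ν K).toReal) ^ (((k : ℝ) + 1) / (k : ℝ) ^ 2)) atTop (nhds δ) := by
      have h2 : Tendsto (fun k : ℕ => ((ν K).toReal) ^ (((k : ℝ) + 1) / (k : ℝ) ^ 2))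
          atTop (nhds 1) := by
        have := (tendsto_const_nhds (x := (ν K).toReal)
          (f := atTop (α := ℕ))).rpow tendsto_ratio2 (Or.inl hcK.ne')
        rwa [Real.rpow_zero] at this
      simpa using hu.mul h2
    rw [tendsto_order]
    constructor
    · -- lower bounds
      intro x hx
      rcases lt_or_ge x 0 with hx0 | hx0
      · exact Filter.Eventually.of_forall fun k =>
          lt_of_lt_of_le hx0 (Real.rpow_nonneg (Zk_nonneg K ν k) _)
      · have hδpos : 0 < δ := lt_of_le_of_lt hx0 hx
        obtain ⟨ε, hε, hxε⟩ := exists_eps hδpos hx0 hx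
        obtain ⟨C, hC, hbm⟩ := hBM ε hε
        have hε1 : (0 : ℝ) < 1 + ε := by linarith
        set b : ℕ → ℝ := fun k => C ^ (2 * ((k : ℝ) + 1) / (k : ℝ) ^ 2)
          * (1 + ε) ^ (2 * ((k : ℝ) + 1) / (k : ℝ)) with hb
        have hbpos : ∀ k, 0 < b k := fun k =>
          mul_pos (Real.rpow_pos_of_pos hC _) (Real.rpow_pos_of_pos hε1 _)
        have hblim : Tendsto b atTop (nhds ((1 + ε) ^ 2)) := by
          have hb1 : Tendsto (fun k : ℕ => C ^ (2 * ((k : ℝ) + 1) / (k : ℝ) ^ 2))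
              atTop (nhds 1) := by
            have hexp : Tendsto (fun k : ℕ => 2 * ((k : ℝ) + 1) / (k : ℝ) ^ 2)
                atTop (nhds 0) := by
              have := tendsto_ratio2.const_mul (2 : ℝ)
              rw [mul_zero] at this
              refine this.congr fun k => ?_
              rw [mul_div_assoc]
            have := (tendsto_const_nhds (x := C) (f := atTop (α := ℕ))).rpow hexp
              (Or.inl hC.ne')
            rwa [Real.rpow_zero] at this
          have hb2 : Tendsto (fun k : ℕ => (1 + ε) ^ (2 * ((k : ℝ) + 1) / (k : ℝ)))
              atTop (nhds ((1 + ε) ^ 2)) := by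
            have hexp : Tendsto (fun k : ℕ => 2 * ((k : ℝ) + 1) / (k : ℝ))
                atTop (nhds 2) := by
              have := tendsto_ratio1.const_mul (2 : ℝ)
              rw [mul_one] at this
              refine this.congr fun k => ?_
              rw [mul_div_assoc]
            have := (tendsto_const_nhds (x := 1 + ε) (f := atTop (α := ℕ))).rpow hexp
              (Or.inl hε1.ne')
            rwa [show ((1 + ε) : ℝ) ^ (2 : ℝ) = (1 + ε) ^ (2 : ℕ) by
              rw [← Real.rpow_natCast (1 + ε) 2]; norm_num] at this
          simpa using (hb1.mul hb2)
        have hlow : Tendsto (fun k : ℕ => deltak K k ^ (((k : ℝ) + 1) / k) / b k)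
            atTop (nhds (δ / (1 + ε) ^ 2)) := hu.div hblim (by positivity)
        have hev : ∀ᶠ k : ℕ in atTop, x < deltak K k ^ (((k : ℝ) + 1) / k) / b k :=
          hlow.eventually (eventually_gt_nhds hxε)
        filter_upwards [hev, eventually_ge_atTop 1] with k h1 h2
        refine h1.trans_le ?_
        rw [div_le_iff₀ (hbpos k)]
        have := lower_bound hK hne hν hC hε hbm h2
        rw [hb]
        dsimp only
        rw [mul_comm]
        exact this
    · -- upper bounds
      intro x hx
      have hev : ∀ᶠ k : ℕ in atTop, deltak K k ^ (((k : ℝ) + 1) / k)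
          * ((ν K).toReal) ^ (((k : ℝ) + 1) / (k : ℝ) ^ 2) < x :=
        hup.eventually (eventually_lt_nhds hx)
      filter_upwards [hev, eventually_ge_atTop 1] with k h1 h2
      exact lt_of_le_of_lt (upper_bound hK hne hν h2) h1
  · -- empty case
    rw [Set.not_nonempty_iff_eq_empty] at hne
    subst hne
    have hdelta0 : ∀ k : ℕ, deltak (∅ : Set ℂ) k = 0 := by
      intro k
      unfold deltak
      have h : {z : Fin (k + 1) → ℂ | ∀ i, z i ∈ (∅ : Set ℂ)} = ∅ := by
        ext z
        simp only [Set.mem_setOf_eq, Set.mem_empty_iff_false, iff_false, not_forall]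
        exact ⟨0, fun h => h⟩
      rw [h, Set.image_empty, Real.sSup_empty]
    have hZ0 : ∀ k : ℕ, Zk (∅ : Set ℂ) ν k = 0 := by
      intro k
      unfold Zk
      have h : {z : Fin (k + 1) → ℂ | ∀ i, z i ∈ (∅ : Set ℂ)} = ∅ := by
        ext z
        simp only [Set.mem_setOf_eq, Set.mem_empty_iff_false, iff_false, not_forall]
        exact ⟨0, fun h => h⟩
      rw [h, Measure.restrict_empty, MeasureTheory.integral_zero_measure]
    refine ⟨0, le_rfl, ?_, ?_, ?_⟩
    · intro m n _ _; rw [hdelta0, hdelta0]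
    · refine tendsto_const_nhds.congr fun k => (hdelta0 k).symm
    · refine tendsto_const_nhds.congr' ?_
      filter_upwards [eventually_ge_atTop 1] with k hk
      rw [hZ0 k]
      rw [Real.zero_rpow]
      positivity
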